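/- Let V, U, X, Y, T be discrete random variables with finite support on a common probability space. If V → U → X → Y forms a Markov chain and T is a sufficient statistic of X for U, then V → U → T → X → Y forms a Markov chain. -/

import Mathlib

namespace Paper

/-- The probability of an event under a probability mass function. -/
noncomputable def pr {Ω : Type} (μ : PMF Ω) (E : Set Ω) : ENNReal :=
  μ.toOuterMeasure E

/-- Conditional independence `X ⊥⊥ Y | Z`:
`p(x,y,z) p(z) = p(x,z) p(y,z)` for all `x, y, z`. -/
def CondIndep {Ω α β γ : Type} (μ : PMF Ω) (X : Ω → α) (Y : Ω → β) (Z : Ω → γ) : Prop :=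
  ∀ (x : α) (y : β) (z : γ),
    pr μ {ω | X ω = x ∧ Y ω = y ∧ Z ω = z} * pr μ {ω | Z ω = z}
      = pr μ {ω | X ω = x ∧ Z ω = z} * pr μ {ω | Y ω = y ∧ Z ω = z}

/-- Unconditional independence `X ⊥⊥ Y`. -/
def Indep {Ω α β : Type} (μ : PMF Ω) (X : Ω → α) (Y : Ω → β) : Prop :=
  ∀ (x : α) (y : β),
    pr μ {ω | X ω = x ∧ Y ω = y} = pr μ {ω | X ω = x} * pr μ {ω | Y ω = y}

/-- `X ≥ι Y`: `X` functionally determines `Y` (with probability one). -/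
def FunDep {Ω α β : Type} (μ : PMF Ω) (X : Ω → α) (Y : Ω → β) : Prop :=
  ∃ f : α → β, ∀ ω ∈ μ.support, Y ω = f (X ω)

/-- `X =ι Y`: informational equivalence. -/
def InfoEq {Ω α β : Type} (μ : PMF Ω) (X : Ω → α) (Y : Ω → β) : Prop :=
  FunDep μ X Y ∧ FunDep μ Y X

/-- The random variable `X` has finite support. -/
def FinSupp {Ω α : Type} (μ : PMF Ω) (X : Ω → α) : Prop :=
  (X '' μ.support).Finite

/-- The random variable `X` has support of cardinality at most `ℓ`. -/
def CardLE {Ω α : Type} (μ : PMF Ω) (X : Ω → α) (ℓ : ℕ) : Prop :=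
  ∃ s : Finset α, s.card ≤ ℓ ∧ ∀ ω ∈ μ.support, X ω ∈ s

/-- `X` is uniformly distributed with support of cardinality `ℓ`. -/
def UniformCard {Ω α : Type} (μ : PMF Ω) (X : Ω → α) (ℓ : ℕ) : Prop :=
  ∃ S : Finset α, S.card = ℓ ∧ (∀ x ∈ S, pr μ {ω | X ω = x} = (ℓ : ENNReal)⁻¹) ∧
    ∀ x, x ∉ S → pr μ {ω | X ω = x} = 0

/-- The probability mass function of the random variable `X`. -/
noncomputable def distOf {Ω α : Type} (μ : PMF Ω) (X : Ω → α) : α → ENNReal :=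
  fun x => pr μ {ω | X ω = x}

/-- `p ⪰ q` : `p` majorizes `q`, i.e. for every `k`, the sum of the `k` largest values
of `p` is at least the sum of the `k` largest values of `q`. -/
def Majorizes (p q : ℕ → ENNReal) : Prop :=
  ∀ s : Finset ℕ, ∃ t : Finset ℕ, t.card ≤ s.card ∧ ∑ x ∈ s, q x ≤ ∑ x ∈ t, p x

/-- `T` is a sufficient statistic of `X` for `U`: `X ≥ι T` and `U ⊥⊥ X | T`. -/
def SuffStat {Ω α β γ : Type} (μ : PMF Ω) (X : Ω → α) (U : Ω → β) (T : Ω → γ) : Prop :=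
  FunDep μ X T ∧ CondIndep μ U X T

/-- `T` is a minimal sufficient statistic of `X` for `U`. -/
def MinSuffStat {Ω α β γ : Type} (μ : PMF Ω) (X : Ω → α) (U : Ω → β) (T : Ω → γ) : Prop :=
  SuffStat μ X U T ∧
    ∀ (δ : Type) (T' : Ω → δ), SuffStat μ X U T' → FunDep μ T' T

/-- Mutual independence of the subfamily `(V i)_{i ∈ s}`: each `V i` (for `i ∈ s`) is
independent of the joint variable of the others. -/
def MutIndepOn {Ω ι : Type} {β : ι → Type} (μ : PMF Ω) (V : ∀ i, Ω → β i)
    (s : Finset ι) : Prop :=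
  ∀ i ∈ s, Indep μ (V i) (fun ω => fun j : {j // j ∈ s ∧ j ≠ i} => V j.1 ω)

/-- Mutual independence of the whole family `(V i)_i`. -/
def MutIndep {Ω ι : Type} {β : ι → Type} (μ : PMF Ω) (V : ∀ i, Ω → β i) : Prop :=
  ∀ i, Indep μ (V i) (fun ω => fun j : {j // j ≠ i} => V j.1 ω)

/-- Mutual independence of `(V i)_{i ∈ C}` for a list `C` of indices. -/
def MutIndepL {Ω : Type} (μ : PMF Ω) (V : ℕ → Ω → ℕ) (C : List ℕ) : Prop :=
  ∀ i ∈ C, Indep μ (V i) (fun ω => fun j : {j // j ∈ C ∧ j ≠ i} => V j.1 ω)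

/-- The joint random variable `(X a)_{a ∈ A}` for a list `A` of indices. -/
def jointOn {Ω : Type} (X : ℕ → Ω → ℕ) (A : List ℕ) : Ω → ({a : ℕ // a ∈ A} → ℕ) :=
  fun ω a => X a.1 ω

/-- The joint random variable `(T i)_{i ∈ S}` for a finset `S` of indices. -/
def jointFin {Ω ι : Type} {β : ι → Type} (T : ∀ i, Ω → β i) (S : Finset ι) :
    Ω → ((i : {i // i ∈ S}) → β i.1) :=
  fun ω i => T i.1 ω

/-- The set of parents (in-neighbours) of `w` in the directed graph with edge relation `E`. -/
def parentSet {ν : Type} (E : ν → ν → Prop) (w : ν) : Set ν := {v | E v w}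

/-- The set of nodes that are neither descendants nor parents of `w`. -/
def nonDescSet {ν : Type} (E : ν → ν → Prop) (w : ν) : Set ν :=
  {v | ¬ Relation.ReflTransGen E w v ∧ ¬ E v w}

/-- The collection of random variables `(X v)_v` satisfies the Bayesian network structure
with edge relation `E`: each variable is conditionally independent of its
non-descendant non-parent variables given its parent variables. -/
def SatisfiesBN {Ω ν : Type} {β : ν → Type} (μ : PMF Ω) (X : ∀ v, Ω → β v)
    (E : ν → ν → Prop) : Prop :=
  ∀ w : ν, CondIndep μ (X w)
    (fun ω => fun v : nonDescSet E w => X v.1 ω)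
    (fun ω => fun v : parentSet E w => X v.1 ω)

/-- `E` is (the edge list of) a directed acyclic graph on the nodes `{0, …, n-1}`. -/
def IsDAG (n : ℕ) (E : List (ℕ × ℕ)) : Prop :=
  (∀ e ∈ E, e.1 < n ∧ e.2 < n) ∧
    ∀ i : ℕ, ¬ Relation.TransGen (fun a c => (a, c) ∈ E) i i

/-- The edge relation on `Fin n` determined by an edge list. -/
def edgeRelOn (n : ℕ) (E : List (ℕ × ℕ)) : Fin n → Fin n → Prop :=
  fun i j => ((i : ℕ), (j : ℕ)) ∈ E

/-- `(X_0, …, X_{n-1})` satisfies the Bayesian network given by the edge list `E`. -/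
def SatisfiesBNn {Ω : Type} (μ : PMF Ω) (n : ℕ) (X : ℕ → Ω → ℕ)
    (E : List (ℕ × ℕ)) : Prop :=
  SatisfiesBN μ (fun i : Fin n => X (i : ℕ)) (edgeRelOn n E)

/-- `(A, C, B) ∈ I(G_1, …, G_m)`: every collection of finitely supported discrete random
variables satisfying all the network structures in `Gs` satisfies `X_A ⊥⊥ X_B | X_C`. -/
def ImpliedCI (n : ℕ) (Gs : List (List (ℕ × ℕ))) (A C B : List ℕ) : Prop :=
  ∀ (Ω : Type) (μ : PMF Ω) (X : ℕ → Ω → ℕ),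
    (∀ i, i < n → FinSupp μ (X i)) →
    (∀ G ∈ Gs, SatisfiesBNn μ n X G) →
    CondIndep μ (jointOn X A) (jointOn X B) (jointOn X C)

/-- Two lists are disjoint as sets. -/
def DisjointL (A B : List ℕ) : Prop := ∀ a ∈ A, a ∉ B

end Paper
namespace Paper


private lemma pr_eq_tsum {Ω : Type} (μ : PMF Ω) (E : Set Ω) :
    pr μ E = ∑' ω, E.indicator μ ω := PMF.toOuterMeasure_apply μ E

private lemma pr_congr {Ω : Type} (μ : PMF Ω) {E F : Set Ω}
    (h : ∀ ω, μ ω ≠ 0 → (ω ∈ E ↔ ω ∈ F)) : pr μ E = pr μ F := by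
  rw [pr_eq_tsum, pr_eq_tsum]
  refine tsum_congr fun ω => ?_
  by_cases hμ : μ ω = 0
  · by_cases hE : ω ∈ E <;> by_cases hF : ω ∈ F <;>
      simp [Set.indicator_of_mem, Set.indicator_of_notMem, hE, hF, hμ]
  · by_cases hE : ω ∈ E
    · rw [Set.indicator_of_mem hE, Set.indicator_of_mem ((h ω hμ).mp hE)]
    · rw [Set.indicator_of_notMem hE,
        Set.indicator_of_notMem (fun hF => hE ((h ω hμ).mpr hF))]

private lemma pr_zero {Ω : Type} (μ : PMF Ω) {E : Set Ω}
    (h : ∀ ω, μ ω ≠ 0 → ω ∉ E) : pr μ E = 0 := by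
  have h0 : pr μ E = pr μ (∅ : Set Ω) := pr_congr μ fun ω hμ => by simp [h ω hμ]
  rw [h0, pr_eq_tsum]; simp

private lemma pr_mono {Ω : Type} (μ : PMF Ω) {E F : Set Ω} (h : E ⊆ F) :
    pr μ E ≤ pr μ F := μ.toOuterMeasure.mono h

private lemma pr_ne_top {Ω : Type} (μ : PMF Ω) (E : Set Ω) : pr μ E ≠ ⊤ := by
  have hle : pr μ E ≤ 1 := by
    rw [pr_eq_tsum]
    calc ∑' ω, E.indicator μ ω ≤ ∑' ω, μ ω :=
          Summable.tsum_le_tsum (fun ω => Set.indicator_le_self E μ ω)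
            ENNReal.summable ENNReal.summable
      _ = 1 := μ.tsum_coe
  exact ne_top_of_le_ne_top ENNReal.one_ne_top hle

private lemma ennreal_mul_cancel {a b c : ENNReal} (hc0 : c ≠ 0) (hct : c ≠ ⊤)
    (h : a * c = b * c) : a = b := by
  have h2 := congrArg (· * c⁻¹) h
  simpa [mul_assoc, ENNReal.mul_inv_cancel hc0 hct] using h2

private lemma pr_decomp {Ω γ : Type} (μ : PMF Ω) (X : Ω → γ) (S : Finset γ)
    (hS : ∀ ω, μ ω ≠ 0 → X ω ∈ S) (E : Set Ω) :
    pr μ E = ∑ x ∈ S, pr μ (E ∩ {ω | X ω = x}) := by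
  classical
  simp only [pr_eq_tsum]
  rw [← Summable.tsum_finsetSum (fun i _ => ENNReal.summable)]
  refine tsum_congr fun ω => ?_
  by_cases hE : ω ∈ E
  · have hind : ∀ x : γ, (E ∩ {ω' | X ω' = x}).indicator μ ω
        = if X ω = x then μ ω else 0 := by
      intro x
      by_cases hx : X ω = x
      · rw [Set.indicator_of_mem (Set.mem_inter hE hx), if_pos hx]
      · rw [Set.indicator_of_notMem (fun hm => hx hm.2), if_neg hx]
    rw [Set.indicator_of_mem hE]
    by_cases hμ : μ ω = 0
    · simp [hind, hμ]
    · simp only [hind]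
      rw [Finset.sum_ite_eq S (X ω) (fun _ => μ ω), if_pos (hS ω hμ)]
  · rw [Set.indicator_of_notMem hE]
    have hind : ∀ x : γ, (E ∩ {ω' | X ω' = x}).indicator μ ω = 0 := fun x =>
      Set.indicator_of_notMem (fun hm => hE hm.1) _
    simp [hind]

/-- Lemma 3 of the paper: if `V → U → X → Y` forms a Markov chain and `T` is a
sufficient statistic of `X` for `U`, then `V → U → T → X → Y` forms a Markov chain. -/
theorem suffStat_insert_markov {Ω α β γ δ ε : Type}
    (μ : PMF Ω) (V : Ω → α) (U : Ω → β) (X : Ω → γ) (Y : Ω → δ) (T : Ω → ε)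
    (hV : FinSupp μ V) (hU : FinSupp μ U) (hX : FinSupp μ X)
    (hY : FinSupp μ Y) (hT : FinSupp μ T)
    (h1 : CondIndep μ X V U)
    (h2 : CondIndep μ Y (fun ω => (V ω, U ω)) X)
    (hss : SuffStat μ X U T) :
    CondIndep μ T V U ∧
    CondIndep μ X (fun ω => (V ω, U ω)) T ∧
    CondIndep μ Y (fun ω => (V ω, U ω, T ω)) X := by
  classical
  obtain ⟨⟨f, hf⟩, hUX⟩ := hss
  have hf' : ∀ ω, μ ω ≠ 0 → T ω = f (X ω) := fun ω h =>
    hf ω (((PMF.mem_support_iff _ _).mpr h))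
  set S : Finset γ := hX.toFinset with hSdef
  have hS : ∀ ω, μ ω ≠ 0 → X ω ∈ S := fun ω h =>
    hX.mem_toFinset.mpr ⟨ω, ((PMF.mem_support_iff _ _).mpr h), rfl⟩
  -- Part (a): T ⊥⊥ V | U
  have ha : CondIndep μ T V U := by
    intro t v u
    rw [pr_decomp μ X S hS {ω | T ω = t ∧ V ω = v ∧ U ω = u},
        pr_decomp μ X S hS {ω | T ω = t ∧ U ω = u},
        Finset.sum_mul, Finset.sum_mul]
    refine Finset.sum_congr rfl fun x _ => ?_
    by_cases hfx : f x = t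
    · have e1 : pr μ ({ω | T ω = t ∧ V ω = v ∧ U ω = u} ∩ {ω | X ω = x})
          = pr μ {ω | X ω = x ∧ V ω = v ∧ U ω = u} := by
        refine pr_congr μ fun ω hμ => ?_
        simp only [Set.mem_inter_iff, Set.mem_setOf_eq, hf' ω hμ]
        constructor
        · rintro ⟨⟨_, h2', h3⟩, h4⟩; exact ⟨h4, h2', h3⟩
        · rintro ⟨h4, h2', h3⟩; exact ⟨⟨(by rw [h4]; exact hfx), h2', h3⟩, h4⟩
      have e2 : pr μ ({ω | T ω = t ∧ U ω = u} ∩ {ω | X ω = x})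
          = pr μ {ω | X ω = x ∧ U ω = u} := by
        refine pr_congr μ fun ω hμ => ?_
        simp only [Set.mem_inter_iff, Set.mem_setOf_eq, hf' ω hμ]
        constructor
        · rintro ⟨⟨_, h3⟩, h4⟩; exact ⟨h4, h3⟩
        · rintro ⟨h4, h3⟩; exact ⟨⟨(by rw [h4]; exact hfx), h3⟩, h4⟩
      rw [e1, e2]; exact h1 x v u
    · have e1 : pr μ ({ω | T ω = t ∧ V ω = v ∧ U ω = u} ∩ {ω | X ω = x}) = 0 :=
        pr_zero μ fun ω hμ => by
          rintro ⟨⟨ht', _, _⟩, h4⟩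
          exact hfx (by rw [← h4, ← hf' ω hμ]; exact ht')
      have e2 : pr μ ({ω | T ω = t ∧ U ω = u} ∩ {ω | X ω = x}) = 0 :=
        pr_zero μ fun ω hμ => by
          rintro ⟨⟨ht', _⟩, h4⟩
          exact hfx (by rw [← h4, ← hf' ω hμ]; exact ht')
      rw [e1, e2, zero_mul, zero_mul]
  -- Part (b): X ⊥⊥ (V,U) | T
  have hb : CondIndep μ X (fun ω => (V ω, U ω)) T := by
    intro x vu t
    obtain ⟨v, u⟩ := vu
    simp only [Prod.mk.injEq]
    by_cases hfx : f x = t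
    · have e2 : pr μ {ω | X ω = x ∧ T ω = t} = pr μ {ω | X ω = x} := by
        refine pr_congr μ fun ω hμ => ?_
        simp only [Set.mem_setOf_eq, hf' ω hμ]
        constructor
        · rintro ⟨h4, _⟩; exact h4
        · intro h4; exact ⟨h4, (by rw [h4]; exact hfx)⟩
      have e1 : pr μ {ω | X ω = x ∧ (V ω = v ∧ U ω = u) ∧ T ω = t}
          = pr μ {ω | X ω = x ∧ V ω = v ∧ U ω = u} := by
        refine pr_congr μ fun ω hμ => ?_
        simp only [Set.mem_setOf_eq, hf' ω hμ]
        constructor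
        · rintro ⟨h4, ⟨h2', h3⟩, _⟩; exact ⟨h4, h2', h3⟩
        · rintro ⟨h4, h2', h3⟩; exact ⟨h4, ⟨h2', h3⟩, (by rw [h4]; exact hfx)⟩
      rw [e1, e2]
      by_cases hu : pr μ {ω | U ω = u} = 0
      · have z1 : pr μ {ω | X ω = x ∧ V ω = v ∧ U ω = u} = 0 :=
          le_antisymm (le_trans (pr_mono μ fun ω h => h.2.2) hu.le) zero_le
        have z2 : pr μ {ω | (V ω = v ∧ U ω = u) ∧ T ω = t} = 0 :=
          le_antisymm (le_trans (pr_mono μ fun ω h => h.1.2) hu.le) zero_le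
        rw [z1, z2, zero_mul, mul_zero]
      · have h1' := h1 x v u
        have hUX' := hUX u x t
        have e3 : pr μ {ω | U ω = u ∧ X ω = x ∧ T ω = t}
            = pr μ {ω | X ω = x ∧ U ω = u} := by
          refine pr_congr μ fun ω hμ => ?_
          simp only [Set.mem_setOf_eq, hf' ω hμ]
          constructor
          · rintro ⟨h3, h4, _⟩; exact ⟨h4, h3⟩
          · rintro ⟨h4, h3⟩; exact ⟨h3, h4, (by rw [h4]; exact hfx)⟩
        rw [e3, e2] at hUX'
        have ha' := ha t v u
        have e5 : pr μ {ω | T ω = t ∧ V ω = v ∧ U ω = u}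
            = pr μ {ω | (V ω = v ∧ U ω = u) ∧ T ω = t} := by
          refine pr_congr μ fun ω _ => ?_
          simp only [Set.mem_setOf_eq]
          tauto
        have e6 : pr μ {ω | T ω = t ∧ U ω = u} = pr μ {ω | U ω = u ∧ T ω = t} := by
          refine pr_congr μ fun ω _ => ?_
          simp only [Set.mem_setOf_eq]
          tauto
        rw [e5, e6] at ha'
        refine ennreal_mul_cancel hu (pr_ne_top μ _) ?_
        calc pr μ {ω | X ω = x ∧ V ω = v ∧ U ω = u} * pr μ {ω | T ω = t}
              * pr μ {ω | U ω = u}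
            = pr μ {ω | X ω = x ∧ V ω = v ∧ U ω = u} * pr μ {ω | U ω = u}
              * pr μ {ω | T ω = t} := by ring
          _ = pr μ {ω | X ω = x ∧ U ω = u} * pr μ {ω | V ω = v ∧ U ω = u}
              * pr μ {ω | T ω = t} := by rw [h1']
          _ = pr μ {ω | V ω = v ∧ U ω = u}
              * (pr μ {ω | X ω = x ∧ U ω = u} * pr μ {ω | T ω = t}) := by ring
          _ = pr μ {ω | V ω = v ∧ U ω = u}
              * (pr μ {ω | U ω = u ∧ T ω = t} * pr μ {ω | X ω = x}) := by rw [hUX']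
          _ = pr μ {ω | X ω = x}
              * (pr μ {ω | U ω = u ∧ T ω = t} * pr μ {ω | V ω = v ∧ U ω = u}) := by
            ring
          _ = pr μ {ω | X ω = x}
              * (pr μ {ω | (V ω = v ∧ U ω = u) ∧ T ω = t} * pr μ {ω | U ω = u}) := by
            rw [← ha']
          _ = pr μ {ω | X ω = x} * pr μ {ω | (V ω = v ∧ U ω = u) ∧ T ω = t}
              * pr μ {ω | U ω = u} := by ring
    · have z1 : pr μ {ω | X ω = x ∧ (V ω = v ∧ U ω = u) ∧ T ω = t} = 0 :=
        pr_zero μ fun ω hμ => by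
          rintro ⟨h4, _, ht'⟩
          exact hfx (by rw [← h4, ← hf' ω hμ]; exact ht')
      have z2 : pr μ {ω | X ω = x ∧ T ω = t} = 0 :=
        pr_zero μ fun ω hμ => by
          rintro ⟨h4, ht'⟩
          exact hfx (by rw [← h4, ← hf' ω hμ]; exact ht')
      rw [z1, z2, zero_mul, zero_mul]
  refine ⟨ha, hb, ?_⟩
  -- Part (c): Y ⊥⊥ (V,U,T) | X
  intro y vut x
  obtain ⟨v, u, t⟩ := vut
  simp only [Prod.mk.injEq]
  by_cases hfx : f x = t
  · have h2' := h2 y (v, u) x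
    simp only [Prod.mk.injEq] at h2'
    have e1 : pr μ {ω | Y ω = y ∧ (V ω = v ∧ U ω = u ∧ T ω = t) ∧ X ω = x}
        = pr μ {ω | Y ω = y ∧ (V ω = v ∧ U ω = u) ∧ X ω = x} := by
      refine pr_congr μ fun ω hμ => ?_
      simp only [Set.mem_setOf_eq, hf' ω hμ]
      constructor
      · rintro ⟨hy, ⟨h2a, h3, _⟩, h4⟩; exact ⟨hy, ⟨h2a, h3⟩, h4⟩
      · rintro ⟨hy, ⟨h2a, h3⟩, h4⟩
        exact ⟨hy, ⟨h2a, h3, (by rw [h4]; exact hfx)⟩, h4⟩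
    have e2 : pr μ {ω | (V ω = v ∧ U ω = u ∧ T ω = t) ∧ X ω = x}
        = pr μ {ω | (V ω = v ∧ U ω = u) ∧ X ω = x} := by
      refine pr_congr μ fun ω hμ => ?_
      simp only [Set.mem_setOf_eq, hf' ω hμ]
      constructor
      · rintro ⟨⟨h2a, h3, _⟩, h4⟩; exact ⟨⟨h2a, h3⟩, h4⟩
      · rintro ⟨⟨h2a, h3⟩, h4⟩
        exact ⟨⟨h2a, h3, (by rw [h4]; exact hfx)⟩, h4⟩
    rw [e1, e2]
    exact h2'
  · have z1 : pr μ {ω | Y ω = y ∧ (V ω = v ∧ U ω = u ∧ T ω = t) ∧ X ω = x} = 0 :=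
      pr_zero μ fun ω hμ => by
        rintro ⟨_, ⟨_, _, ht'⟩, h4⟩
        exact hfx (by rw [← h4, ← hf' ω hμ]; exact ht')
    have z2 : pr μ {ω | (V ω = v ∧ U ω = u ∧ T ω = t) ∧ X ω = x} = 0 :=
      pr_zero μ fun ω hμ => by
        rintro ⟨⟨_, _, ht'⟩, h4⟩
        exact hfx (by rw [← h4, ← hf' ω hμ]; exact ht')
    rw [z1, z2, zero_mul, mul_zero]


end Paper
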